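/- Let α ∈ (0,1) and τ₁ ∈ (0,1). There exists a constant C > 0 (depending only on α and τ₁, or even absolute) such that for every integer n ≥ 2, ∑_{k=1}^{n−1} k·τ₁^k / (n−k)^α ≤ C · ( 1/n^{α/2} + n^{α/4}·τ₁^{n^{α/4}} / (1 − τ₁) + τ₁^{n^{α/4}+1} / (1 − τ₁)² ), where τ₁^{n^{α/4}} denotes the real power τ₁ raised to the exponent n^{α/4}. -/

import Mathlib

open Complex Metric Set MeasureTheory
open scoped ComplexConjugate Real Topology

noncomputable def wbar (f : ℂ → ℂ) (z : ℂ) : ℂ :=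
  (1 / 2) * (fderiv ℝ f z 1 + Complex.I * fderiv ℝ f z Complex.I)

noncomputable def wd (f : ℂ → ℂ) (z : ℂ) : ℂ :=
  (1 / 2) * (fderiv ℝ f z 1 - Complex.I * fderiv ℝ f z Complex.I)

/-- `f` is `L_τ`-analytic on `U`: twice continuously real differentiable and
`∂̄(∂̄ + τ∂)f = 0` on `U`. -/
def LtauAnalyticOn (τ : ℝ) (f : ℂ → ℂ) (U : Set ℂ) : Prop :=
  ContDiffOn ℝ 2 f U ∧ ∀ z ∈ U, wbar (fun w => wbar f w + (τ : ℂ) * wd f w) z = 0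

noncomputable def supAbsOn (f : ℂ → ℂ) (K : Set ℂ) : ℝ :=
  ⨆ z : K, ‖f z.1‖

def IsJordanCurve (Γ : Set ℂ) : Prop :=
  ∃ w : ℝ → ℂ, ContinuousOn w (Set.Icc 0 1) ∧ Set.InjOn w (Set.Ico 0 1) ∧
    w 0 = w 1 ∧ Γ = w '' Set.Icc 0 1

/-- `G` is the bounded connected component of the complement of the Jordan curve `Γ`
(so that `∂G = Γ`). -/
def IsJordanDomain (G Γ : Set ℂ) : Prop :=
  IsJordanCurve Γ ∧ Bornology.IsBounded G ∧
    (∃ z ∈ Γᶜ, G = connectedComponentIn Γᶜ z) ∧ frontier G = Γ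

/-- `w` is a `C^{1,α}` parametrization of the Jordan curve `Γ`, with derivative `w'`. -/
def IsC1aParam (α : ℝ) (Γ : Set ℂ) (w w' : ℝ → ℂ) : Prop :=
  Γ = w '' Set.Icc 0 1 ∧ Set.InjOn w (Set.Ico 0 1) ∧ w 0 = w 1 ∧
  (∀ ξ ∈ Set.Icc (0:ℝ) 1, HasDerivWithinAt w (w' ξ) (Set.Icc 0 1) ξ) ∧
  ContinuousOn w' (Set.Icc 0 1) ∧ (∀ ξ ∈ Set.Icc (0:ℝ) 1, w' ξ ≠ 0) ∧
  ∃ C > 0, ∀ ξ₁ ∈ Set.Icc (0:ℝ) 1, ∀ ξ₂ ∈ Set.Icc (0:ℝ) 1,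
    ‖w' ξ₁ - w' ξ₂‖ ≤ C * |ξ₁ - ξ₂| ^ α

def IsC1aJordanCurve (α : ℝ) (Γ : Set ℂ) : Prop :=
  ∃ w w' : ℝ → ℂ, IsC1aParam α Γ w w'

/-- The tangent line to the `C^{1,α}` curve `Γ` at the origin is the real axis. -/
def RealTangentAtZero (α : ℝ) (Γ : Set ℂ) : Prop :=
  ∃ w w' : ℝ → ℂ, IsC1aParam α Γ w w' ∧
    ∃ ξ₀ ∈ Set.Icc (0:ℝ) 1, w ξ₀ = 0 ∧ (w' ξ₀).im = 0

/-- `φ` is a conformal map of the open unit disc onto `G`. -/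
def ConformalOfDisc (φ : ℂ → ℂ) (G : Set ℂ) : Prop :=
  DifferentiableOn ℂ φ (Metric.ball (0:ℂ) 1) ∧ Set.InjOn φ (Metric.ball (0:ℂ) 1) ∧
    φ '' Metric.ball (0:ℂ) 1 = G

/-- `φ` (already extended) is a homeomorphism of the closed unit disc onto `closure G`. -/
def HomeoExtension (φ : ℂ → ℂ) (G : Set ℂ) : Prop :=
  ContinuousOn φ (Metric.closedBall (0:ℂ) 1) ∧ Set.InjOn φ (Metric.closedBall (0:ℂ) 1) ∧
    φ '' Metric.closedBall (0:ℂ) 1 = closure G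


private lemma pow4_bound (x : ℝ) (hx : 0 ≤ x) : x ≤ x ^ (4:ℕ) / 8 + 8 := by
  nlinarith [sq_nonneg (x^2 - 4), sq_nonneg (2*x - 1)]


set_option maxHeartbeats 1000000 in
/-- the summation estimate used in the proof of Theorem `thm-mainest`. -/
theorem stmt17 (α τ₁ : ℝ) (hα : α ∈ Set.Ioo (0:ℝ) 1) (hτ : τ₁ ∈ Set.Ioo (0:ℝ) 1) :
    ∃ C > (0:ℝ), ∀ n : ℕ, 2 ≤ n →
      ∑ k ∈ Finset.Ico 1 n, (k : ℝ) * τ₁ ^ k / ((n : ℝ) - (k : ℝ)) ^ α ≤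
        C * (1 / (n : ℝ) ^ (α / 2) +
          (n : ℝ) ^ (α / 4) * τ₁ ^ ((n : ℝ) ^ (α / 4)) / (1 - τ₁) +
          τ₁ ^ ((n : ℝ) ^ (α / 4) + 1) / (1 - τ₁) ^ 2) := by
  obtain ⟨hα0, hα1⟩ := hα
  obtain ⟨hτ0, hτ1⟩ := hτ
  set s : ℝ := τ₁ ^ ((1:ℝ)/2) with hs_def
  set r : ℝ := τ₁ ^ ((1:ℝ)/8) with hr_def
  have hs0 : 0 < s := Real.rpow_pos_of_pos hτ0 _
  have hs1 : s < 1 := Real.rpow_lt_one hτ0.le hτ1 (by norm_num)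
  have hr0 : 0 < r := Real.rpow_pos_of_pos hτ0 _
  have hr1 : r < 1 := Real.rpow_lt_one hτ0.le hτ1 (by norm_num)
  have h1τ : 0 < 1 - τ₁ := by linarith
  have h1s : 0 < 1 - s := by linarith
  have h1r : 0 < 1 - r := by linarith
  have hs_sq : s * s = τ₁ := by
    rw [hs_def, ← Real.rpow_add hτ0]; norm_num
  have hs_half : 1 - τ₁ ≤ 2 * (1 - s) := by nlinarith
  set T : ℝ := τ₁ / (1 - τ₁) ^ 2 with hT_def
  set C2 : ℝ := 1 / ((1 - r) ^ 2 * τ₁ ^ (8:ℕ)) with hC2_def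
  have hT0 : 0 < T := div_pos hτ0 (by positivity)
  have hC20 : 0 < C2 := by positivity
  -- summability facts
  have hsumτ : HasSum (fun k : ℕ => (k:ℝ) * τ₁ ^ k) (τ₁ / (1 - τ₁) ^ 2) :=
    hasSum_coe_mul_geometric_of_norm_lt_one (by rw [Real.norm_eq_abs, abs_of_pos hτ0]; exact hτ1)
  have hsumr : HasSum (fun k : ℕ => (k:ℝ) * r ^ k) (r / (1 - r) ^ 2) :=
    hasSum_coe_mul_geometric_of_norm_lt_one (by rw [Real.norm_eq_abs, abs_of_pos hr0]; exact hr1)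
  refine ⟨2*T + 2*C2 + 1, by linarith, ?_⟩
  intro n hn
  have hn1 : (1:ℝ) ≤ (n:ℝ) := by exact_mod_cast Nat.one_le_of_lt hn
  have hn0 : (0:ℝ) < (n:ℝ) := by linarith
  -- pointwise bound
  have key : ∀ k ∈ Finset.Ico 1 n,
      (k:ℝ) * τ₁ ^ k / ((n:ℝ) - (k:ℝ)) ^ α ≤
        (2:ℝ) ^ α * ((k:ℝ) * τ₁ ^ k) / (n:ℝ) ^ α
          + (n:ℝ) * τ₁ ^ ((n:ℝ)/4) * s ^ k := by
    intro k hk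
    obtain ⟨hk1, hkn⟩ := Finset.mem_Ico.mp hk
    have hk1' : (1:ℝ) ≤ (k:ℝ) := by exact_mod_cast hk1
    have hkn' : (k:ℝ) + 1 ≤ (n:ℝ) := by exact_mod_cast hkn
    have hden : (1:ℝ) ≤ (n:ℝ) - (k:ℝ) := by linarith
    have hnum0 : (0:ℝ) ≤ (k:ℝ) * τ₁ ^ k := by positivity
    have hg0 : (0:ℝ) ≤ (n:ℝ) * τ₁ ^ ((n:ℝ)/4) * s ^ k := by positivity
    have hf0 : (0:ℝ) ≤ (2:ℝ) ^ α * ((k:ℝ) * τ₁ ^ k) / (n:ℝ) ^ α := by positivity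
    rcases le_or_gt (2*(k:ℝ)) (n:ℝ) with h | h
    · -- small k : denominator ≥ n/2
      have h2 : (n:ℝ)/2 ≤ (n:ℝ) - k := by linarith
      have hd : ((n:ℝ)/2) ^ α ≤ ((n:ℝ) - k) ^ α :=
        Real.rpow_le_rpow (by positivity) h2 hα0.le
      have hpos : (0:ℝ) < ((n:ℝ)/2) ^ α := Real.rpow_pos_of_pos (by positivity) _
      have step1 : (k:ℝ) * τ₁ ^ k / ((n:ℝ) - k) ^ α ≤ (k:ℝ) * τ₁ ^ k / ((n:ℝ)/2) ^ α := by
        gcongr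
      have hhalf : ((n:ℝ)/2) ^ α = (n:ℝ) ^ α / (2:ℝ) ^ α := Real.div_rpow hn0.le (by norm_num : (0:ℝ) ≤ 2) α
      have step2 : (k:ℝ) * τ₁ ^ k / ((n:ℝ)/2) ^ α = (2:ℝ) ^ α * ((k:ℝ) * τ₁ ^ k) / (n:ℝ) ^ α := by
        rw [hhalf]
        field_simp
      calc (k:ℝ) * τ₁ ^ k / ((n:ℝ) - k) ^ α ≤ (k:ℝ) * τ₁ ^ k / ((n:ℝ)/2) ^ α := step1
        _ = (2:ℝ) ^ α * ((k:ℝ) * τ₁ ^ k) / (n:ℝ) ^ α := step2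
        _ ≤ _ := le_add_of_nonneg_right hg0
    · -- large k : τ₁^k ≤ s^k * τ₁^(n/4)
      have hd1 : (1:ℝ) ≤ ((n:ℝ) - k) ^ α := Real.one_le_rpow hden hα0.le
      have hsk : s ^ k ≤ τ₁ ^ ((n:ℝ)/4) := by
        have h1 : s ^ k = s ^ (k:ℝ) := (Real.rpow_natCast s k).symm
        have h2 : s ^ ((k:ℝ)) ≤ s ^ ((n:ℝ)/2) :=
          Real.rpow_le_rpow_of_exponent_ge hs0 hs1.le (by linarith)
        have h3 : s ^ ((n:ℝ)/2) = τ₁ ^ ((n:ℝ)/4) := by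
          rw [hs_def, ← Real.rpow_mul hτ0.le]
          congr 1
          ring
        rw [h1, ← h3]; exact h2
      have hτk : τ₁ ^ k ≤ s ^ k * τ₁ ^ ((n:ℝ)/4) := by
        have : τ₁ ^ k = s ^ k * s ^ k := by rw [← hs_sq, mul_pow]
        rw [this]
        exact mul_le_mul_of_nonneg_left hsk (by positivity)
      have hkn'' : (k:ℝ) ≤ (n:ℝ) := by linarith
      have step : (k:ℝ) * τ₁ ^ k / ((n:ℝ) - k) ^ α ≤ (n:ℝ) * τ₁ ^ ((n:ℝ)/4) * s ^ k := by
        have h4 : (k:ℝ) * τ₁ ^ k / ((n:ℝ) - k) ^ α ≤ (k:ℝ) * τ₁ ^ k := by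
          rw [div_le_iff₀ (by linarith)]
          nlinarith
        have h5 : (k:ℝ) * τ₁ ^ k ≤ (n:ℝ) * (s ^ k * τ₁ ^ ((n:ℝ)/4)) := by
          apply mul_le_mul hkn'' hτk (by positivity) hn0.le
        calc (k:ℝ) * τ₁ ^ k / ((n:ℝ) - k) ^ α ≤ (k:ℝ) * τ₁ ^ k := h4
          _ ≤ (n:ℝ) * (s ^ k * τ₁ ^ ((n:ℝ)/4)) := h5
          _ = (n:ℝ) * τ₁ ^ ((n:ℝ)/4) * s ^ k := by ring
      exact le_trans step (le_add_of_nonneg_left hf0)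
  -- sum the bound
  have hsum_split :
      ∑ k ∈ Finset.Ico 1 n, (k:ℝ) * τ₁ ^ k / ((n:ℝ) - (k:ℝ)) ^ α ≤
        ∑ k ∈ Finset.Ico 1 n, (2:ℝ) ^ α * ((k:ℝ) * τ₁ ^ k) / (n:ℝ) ^ α
          + ∑ k ∈ Finset.Ico 1 n, (n:ℝ) * τ₁ ^ ((n:ℝ)/4) * s ^ k := by
    rw [← Finset.sum_add_distrib]
    exact Finset.sum_le_sum key
  -- first sum
  have hS1 : ∑ k ∈ Finset.Ico 1 n, (2:ℝ) ^ α * ((k:ℝ) * τ₁ ^ k) / (n:ℝ) ^ α ≤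
      2 * T * (1 / (n:ℝ) ^ (α/2)) := by
    have hgeo : ∑ k ∈ Finset.Ico 1 n, (k:ℝ) * τ₁ ^ k ≤ T := by
      rw [hT_def, ← hsumτ.tsum_eq]
      exact Summable.sum_le_tsum _ (fun i _ => by positivity) hsumτ.summable
    have h2α : (2:ℝ) ^ α ≤ 2 := by
      calc (2:ℝ) ^ α ≤ (2:ℝ) ^ (1:ℝ) :=
        Real.rpow_le_rpow_of_exponent_le one_le_two hα1.le
        _ = 2 := Real.rpow_one 2
    have hnα : (n:ℝ) ^ (α/2) ≤ (n:ℝ) ^ α :=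
      Real.rpow_le_rpow_of_exponent_le hn1 (by linarith)
    have hnα0 : (0:ℝ) < (n:ℝ) ^ α := Real.rpow_pos_of_pos hn0 _
    have hnα20 : (0:ℝ) < (n:ℝ) ^ (α/2) := Real.rpow_pos_of_pos hn0 _
    have heq : ∑ k ∈ Finset.Ico 1 n, (2:ℝ) ^ α * ((k:ℝ) * τ₁ ^ k) / (n:ℝ) ^ α =
        (2:ℝ) ^ α / (n:ℝ) ^ α * ∑ k ∈ Finset.Ico 1 n, (k:ℝ) * τ₁ ^ k := by
      rw [Finset.mul_sum]
      apply Finset.sum_congr rfl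
      intro k _
      ring
    rw [heq]
    have h2a0 : (0:ℝ) < (2:ℝ) ^ α := Real.rpow_pos_of_pos (by norm_num) _
    calc (2:ℝ) ^ α / (n:ℝ) ^ α * ∑ k ∈ Finset.Ico 1 n, (k:ℝ) * τ₁ ^ k
        ≤ (2:ℝ) / (n:ℝ) ^ (α/2) * T := by
          apply mul_le_mul _ hgeo (Finset.sum_nonneg fun i _ => by positivity) (by positivity)
          exact div_le_div₀ (by norm_num) h2α hnα20 hnα
      _ = 2 * T * (1 / (n:ℝ) ^ (α/2)) := by ring
  -- second sum
  have hS2 : ∑ k ∈ Finset.Ico 1 n, (n:ℝ) * τ₁ ^ ((n:ℝ)/4) * s ^ k ≤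
      2 * C2 * ((n:ℝ) ^ (α/4) * τ₁ ^ ((n:ℝ) ^ (α/4)) / (1 - τ₁)) := by
    have hgeos : ∑ k ∈ Finset.Ico 1 n, s ^ k ≤ (1 - s)⁻¹ := by
      rw [← tsum_geometric_of_lt_one hs0.le hs1]
      exact Summable.sum_le_tsum _ (fun i _ => by positivity) (summable_geometric_of_lt_one hs0.le hs1)
    have heq : ∑ k ∈ Finset.Ico 1 n, (n:ℝ) * τ₁ ^ ((n:ℝ)/4) * s ^ k =
        (n:ℝ) * τ₁ ^ ((n:ℝ)/4) * ∑ k ∈ Finset.Ico 1 n, s ^ k := Finset.mul_sum _ _ _ |>.symm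
    -- key decay bound : n * τ₁^(n/4) ≤ C2 * τ₁^(n^(α/4))
    have hrn : (r:ℝ) ^ n = τ₁ ^ ((n:ℝ)/8) := by
      rw [← Real.rpow_natCast r n, hr_def, ← Real.rpow_mul hτ0.le]
      congr 1
      ring
    have hnr : (n:ℝ) * r ^ n ≤ 1 / (1-r) ^ 2 := by
      have hle : (n:ℝ) * r ^ n ≤ r / (1-r) ^ 2 := by
        rw [← hsumr.tsum_eq]
        exact Summable.le_tsum hsumr.summable n (fun i _ => by positivity)
      calc (n:ℝ) * r ^ n ≤ r / (1-r)^2 := hle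
        _ ≤ 1 / (1-r)^2 := by gcongr
    have hexp : (n:ℝ) ^ (α/4) ≤ (n:ℝ)/8 + 8 := by
      have h14 : (n:ℝ) ^ (α/4) ≤ (n:ℝ) ^ ((1:ℝ)/4) :=
        Real.rpow_le_rpow_of_exponent_le hn1 (by linarith)
      have hx0 : 0 ≤ (n:ℝ) ^ ((1:ℝ)/4) := Real.rpow_nonneg hn0.le _
      have hx4 : ((n:ℝ) ^ ((1:ℝ)/4)) ^ (4:ℕ) = (n:ℝ) := by
        rw [← Real.rpow_natCast ((n:ℝ) ^ ((1:ℝ)/4)) 4, ← Real.rpow_mul hn0.le]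
        norm_num
      have hb := pow4_bound _ hx0
      rw [hx4] at hb
      linarith
    have hτexp : τ₁ ^ ((n:ℝ)/8 + 8) ≤ τ₁ ^ ((n:ℝ) ^ (α/4)) :=
      Real.rpow_le_rpow_of_exponent_ge hτ0 hτ1.le hexp
    have hsplit8 : τ₁ ^ ((n:ℝ)/8 + 8) = τ₁ ^ ((n:ℝ)/8) * τ₁ ^ (8:ℕ) := by
      rw [Real.rpow_add hτ0]
      congr 1
      rw [← Real.rpow_natCast τ₁ 8]
      norm_num
    have hkey : (n:ℝ) * τ₁ ^ ((n:ℝ)/4) ≤ C2 * τ₁ ^ ((n:ℝ) ^ (α/4)) := by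
      have hquarter : τ₁ ^ ((n:ℝ)/4) = r ^ n * r ^ n := by
        rw [hrn, ← Real.rpow_add hτ0]
        congr 1
        ring
      have h1 : (n:ℝ) * τ₁ ^ ((n:ℝ)/4) = ((n:ℝ) * r ^ n) * r ^ n := by rw [hquarter]; ring
      have h2 : ((n:ℝ) * r ^ n) * r ^ n ≤ (1/(1-r)^2) * r ^ n :=
        mul_le_mul_of_nonneg_right hnr (by positivity)
      have h3 : r ^ n * τ₁ ^ (8:ℕ) ≤ τ₁ ^ ((n:ℝ) ^ (α/4)) := by
        rw [← hrn] at hsplit8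
        rw [← hsplit8]; exact hτexp
      have h4 : r ^ n ≤ τ₁ ^ ((n:ℝ) ^ (α/4)) / τ₁ ^ (8:ℕ) := by
        rw [le_div_iff₀ (by positivity)]
        exact h3
      calc (n:ℝ) * τ₁ ^ ((n:ℝ)/4) = ((n:ℝ) * r ^ n) * r ^ n := h1
        _ ≤ (1/(1-r)^2) * r ^ n := h2
        _ ≤ (1/(1-r)^2) * (τ₁ ^ ((n:ℝ) ^ (α/4)) / τ₁ ^ (8:ℕ)) :=
            mul_le_mul_of_nonneg_left h4 (by positivity)
        _ = C2 * τ₁ ^ ((n:ℝ) ^ (α/4)) := by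
            rw [hC2_def]
            field_simp
    have hinv : (1 - s)⁻¹ ≤ 2 / (1 - τ₁) := by
      rw [inv_eq_one_div]
      rw [div_le_div_iff₀ h1s h1τ]
      linarith
    have hone_le : (1:ℝ) ≤ (n:ℝ) ^ (α/4) := Real.one_le_rpow hn1 (by linarith)
    rw [heq]
    have hτn4 : (0:ℝ) < τ₁ ^ ((n:ℝ)/4) := Real.rpow_pos_of_pos hτ0 _
    have hτnα : (0:ℝ) < τ₁ ^ ((n:ℝ) ^ (α/4)) := Real.rpow_pos_of_pos hτ0 _
    calc (n:ℝ) * τ₁ ^ ((n:ℝ)/4) * ∑ k ∈ Finset.Ico 1 n, s ^ k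
        ≤ (C2 * τ₁ ^ ((n:ℝ) ^ (α/4))) * (2 / (1 - τ₁)) := by
          apply mul_le_mul hkey (hgeos.trans hinv)
            (Finset.sum_nonneg fun i _ => by positivity) (by positivity)
      _ = 2 * C2 * (τ₁ ^ ((n:ℝ) ^ (α/4)) / (1 - τ₁)) := by ring
      _ ≤ 2 * C2 * ((n:ℝ) ^ (α/4) * τ₁ ^ ((n:ℝ) ^ (α/4)) / (1 - τ₁)) :=
        by
          have hy : τ₁ ^ ((n:ℝ) ^ (α/4)) ≤ (n:ℝ) ^ (α/4) * τ₁ ^ ((n:ℝ) ^ (α/4)) :=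
            le_mul_of_one_le_left hτnα.le hone_le
          have hfrac : τ₁ ^ ((n:ℝ) ^ (α/4)) / (1 - τ₁) ≤
              (n:ℝ) ^ (α/4) * τ₁ ^ ((n:ℝ) ^ (α/4)) / (1 - τ₁) :=
            div_le_div_of_nonneg_right hy h1τ.le
          exact mul_le_mul_of_nonneg_left hfrac (by linarith)
  -- combine
  set A : ℝ := 1 / (n:ℝ) ^ (α/2) with hA_def
  set B : ℝ := (n:ℝ) ^ (α/4) * τ₁ ^ ((n:ℝ) ^ (α/4)) / (1 - τ₁) with hB_def
  set D : ℝ := τ₁ ^ ((n:ℝ) ^ (α/4) + 1) / (1 - τ₁) ^ 2 with hD_def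
  have hA0 : 0 ≤ A := by positivity
  have hB0 : 0 ≤ B := by
    have : (0:ℝ) < τ₁ ^ ((n:ℝ) ^ (α/4)) := Real.rpow_pos_of_pos hτ0 _
    positivity
  have hD0 : 0 ≤ D := by
    have : (0:ℝ) < τ₁ ^ ((n:ℝ) ^ (α/4) + 1) := Real.rpow_pos_of_pos hτ0 _
    positivity
  have final : ∑ k ∈ Finset.Ico 1 n, (k:ℝ) * τ₁ ^ k / ((n:ℝ) - (k:ℝ)) ^ α ≤
      2 * T * A + 2 * C2 * B := le_trans hsum_split (add_le_add hS1 hS2)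
  calc ∑ k ∈ Finset.Ico 1 n, (k:ℝ) * τ₁ ^ k / ((n:ℝ) - (k:ℝ)) ^ α
      ≤ 2 * T * A + 2 * C2 * B := final
    _ ≤ (2*T + 2*C2 + 1) * (A + B + D) := by
        have e1 : 0 ≤ (2*C2 + 1) * A := mul_nonneg (by linarith) hA0
        have e2 : 0 ≤ (2*T + 1) * B := mul_nonneg (by linarith) hB0
        have e3 : 0 ≤ (2*T + 2*C2 + 1) * D := mul_nonneg (by linarith) hD0
        nlinarith [e1, e2, e3]
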